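/- Let q be a quadratic form on ℝ^d that, in some orthonormal basis, can be written without square terms as q(x) = Σ_{k<l} a_{kl} x_k x_l with not all a_{kl} zero. Let μ be Lebesgue measure on the ball of radius 1 centered at 0 in ℝ^d (with the sup or Euclidean norm as in the statement; the paper uses the unit cube [-1,1]^d implicitly via the proof). Then for all ε > 0, μ({x : |q(x)| ≤ ε}) ≤ (2^{d+1} ε / max|a_{kl}|) · (1 + log⁺(√d · max|a_{kl}| / ε)), where log⁺ t = max(0, log t). -/

import Mathlib

open MeasureTheory

open MeasureTheory Set
open scoped ENNReal

lemma absLine (c e ε : ℝ) (hc : c ≠ 0) :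
    volume {t : ℝ | |c * t + e| ≤ ε} ≤ ENNReal.ofReal (2 * ε / |c|) := by
  rcases hc.lt_or_gt with h | h
  · have hset : {t : ℝ | |c * t + e| ≤ ε} = Set.Icc ((ε - e) / c) ((-ε - e) / c) := by
      ext t
      simp only [Set.mem_setOf_eq, abs_le, Set.mem_Icc, div_le_iff_of_neg h, le_div_iff_of_neg h]
      constructor <;> rintro ⟨h1, h2⟩ <;> constructor <;> nlinarith
    rw [hset, Real.volume_Icc]
    apply ENNReal.ofReal_le_ofReal
    rw [abs_of_neg h]
    rw [div_sub_div_same]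
    have : (-ε - e - (ε - e)) / c = 2 * ε / -c := by
      rw [div_eq_div_iff h.ne (by linarith : -c ≠ 0)]; ring
    rw [this]
  · have hset : {t : ℝ | |c * t + e| ≤ ε} = Set.Icc ((-ε - e) / c) ((ε - e) / c) := by
      ext t
      simp only [Set.mem_setOf_eq, abs_le, Set.mem_Icc, div_le_iff₀ h, le_div_iff₀ h]
      constructor <;> rintro ⟨h1, h2⟩ <;> constructor <;> nlinarith
    rw [hset, Real.volume_Icc]
    apply ENNReal.ofReal_le_ofReal
    rw [abs_of_pos h]
    rw [div_sub_div_same]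
    have : (ε - e - (-ε - e)) / c = 2 * ε / c := by ring_nf
    rw [this]

lemma tail_pos (α w ε a b : ℝ) (hα : 0 < α) (hε : 0 < ε) (hab : a ≤ b) (hba : b - a ≤ 2)
    (hlow : ε ≤ α * a + w) :
    ∫⁻ s in Set.Ioc a b, ENNReal.ofReal (2 * ε / (α * s + w)) ≤
      ENNReal.ofReal (2 * ε / α * Real.log (1 + 2 * α / ε)) := by
  have hpos : ∀ s ∈ Set.Icc a b, 0 < α * s + w := fun s hs => by nlinarith [hs.1]
  have hcont : ContinuousOn (fun s : ℝ => 2 * ε / (α * s + w)) (Set.Icc a b) := by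
    apply ContinuousOn.div continuousOn_const (by fun_prop)
    exact fun s hs => (hpos s hs).ne'
  have hint : IntegrableOn (fun s : ℝ => 2 * ε / (α * s + w)) (Set.Ioc a b) := by
    exact (hcont.integrableOn_Icc).mono_set Set.Ioc_subset_Icc_self
  have hnn : 0 ≤ᵐ[volume.restrict (Set.Ioc a b)] fun s : ℝ => 2 * ε / (α * s + w) := by
    filter_upwards [ae_restrict_mem measurableSet_Ioc] with s hs
    exact le_of_lt (div_pos (by linarith) (hpos s (Set.Ioc_subset_Icc_self hs)))
  rw [← ofReal_integral_eq_lintegral_ofReal hint hnn]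
  apply ENNReal.ofReal_le_ofReal
  have heq : ∫ s in Set.Ioc a b, 2 * ε / (α * s + w) =
      ∫ s in a..b, 2 * ε / (α * s + w) := (intervalIntegral.integral_of_le hab).symm
  rw [heq]
  have h1 : (∫ s in a..b, 2 * ε / (α * s + w)) = 2 * ε * ∫ s in a..b, (α * s + w)⁻¹ := by
    simp_rw [div_eq_mul_inv]
    exact intervalIntegral.integral_const_mul _ _
  have h2 : (∫ s in a..b, (α * s + w)⁻¹) = α⁻¹ • ∫ u in α * a + w..α * b + w, u⁻¹ :=
    intervalIntegral.integral_comp_mul_add (fun u => u⁻¹) hα.ne' w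
  have hA : 0 < α * a + w := lt_of_lt_of_le hε hlow
  have hB : 0 < α * b + w := by nlinarith
  have h3 : (∫ u in α * a + w..α * b + w, u⁻¹) = Real.log ((α * b + w) / (α * a + w)) := by
    apply integral_inv
    intro hmem
    rcases hmem with ⟨h4, h5⟩
    simp only [inf_le_iff, le_sup_iff] at h4 h5
    rcases h4 with h4 | h4 <;> linarith
  rw [h1, h2, h3, smul_eq_mul]
  have hlog : Real.log ((α * b + w) / (α * a + w)) ≤ Real.log (1 + 2 * α / ε) := by
    apply Real.log_le_log (by positivity)
    rw [div_le_iff₀ hA]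
    have h2a : 2 * α / ε * (α * a + w) ≥ 2 * α := by
      rw [ge_iff_le, div_mul_eq_mul_div, le_div_iff₀ hε]; nlinarith
    nlinarith
  calc 2 * ε * (α⁻¹ * Real.log ((α * b + w) / (α * a + w)))
      ≤ 2 * ε * (α⁻¹ * Real.log (1 + 2 * α / ε)) := by
        apply mul_le_mul_of_nonneg_left _ (by positivity)
        exact mul_le_mul_of_nonneg_left hlog (by positivity)
    _ = 2 * ε / α * Real.log (1 + 2 * α / ε) := by ring

lemma tail_neg (α w ε a b : ℝ) (hα : 0 < α) (hε : 0 < ε) (hab : a ≤ b) (hba : b - a ≤ 2)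
    (hupp : α * b + w ≤ -ε) :
    ∫⁻ s in Set.Ioc a b, ENNReal.ofReal (2 * ε / (-(α * s + w))) ≤
      ENNReal.ofReal (2 * ε / α * Real.log (1 + 2 * α / ε)) := by
  have hpos : ∀ s ∈ Set.Icc a b, 0 < -(α * s + w) := fun s hs => by nlinarith [hs.2]
  have hcont : ContinuousOn (fun s : ℝ => 2 * ε / (-(α * s + w))) (Set.Icc a b) := by
    apply ContinuousOn.div continuousOn_const (by fun_prop)
    exact fun s hs => (hpos s hs).ne'
  have hint : IntegrableOn (fun s : ℝ => 2 * ε / (-(α * s + w))) (Set.Ioc a b) := by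
    exact (hcont.integrableOn_Icc).mono_set Set.Ioc_subset_Icc_self
  have hnn : 0 ≤ᵐ[volume.restrict (Set.Ioc a b)] fun s : ℝ => 2 * ε / (-(α * s + w)) := by
    filter_upwards [ae_restrict_mem measurableSet_Ioc] with s hs
    exact le_of_lt (div_pos (by linarith) (hpos s (Set.Ioc_subset_Icc_self hs)))
  rw [← ofReal_integral_eq_lintegral_ofReal hint hnn]
  apply ENNReal.ofReal_le_ofReal
  rw [show (∫ s in Set.Ioc a b, 2 * ε / (-(α * s + w))) =
      ∫ s in a..b, 2 * ε / (-(α * s + w)) from (intervalIntegral.integral_of_le hab).symm]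
  have h1 : (∫ s in a..b, 2 * ε / (-(α * s + w))) = 2 * ε * ∫ s in a..b, (-(α * s + w))⁻¹ := by
    simp_rw [div_eq_mul_inv]
    exact intervalIntegral.integral_const_mul _ _
  have hrw : ∀ s : ℝ, (-(α * s + w))⁻¹ = ((-α) * s + (-w))⁻¹ := by intro s; ring_nf
  have h2 : (∫ s in a..b, (-(α * s + w))⁻¹) = (-α)⁻¹ • ∫ u in (-α) * a + (-w)..(-α) * b + (-w), u⁻¹ := by
    simp_rw [hrw]
    exact intervalIntegral.integral_comp_mul_add (fun u => u⁻¹) (by linarith : (-α) ≠ 0) (-w)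
  have hB : 0 < (-α) * b + (-w) := by nlinarith
  have hA : 0 < (-α) * a + (-w) := by nlinarith
  have h3 : (∫ u in (-α) * a + (-w)..(-α) * b + (-w), u⁻¹) =
      Real.log (((-α) * b + (-w)) / ((-α) * a + (-w))) := by
    apply integral_inv
    intro hmem
    rcases hmem with ⟨h4, h5⟩
    simp only [inf_le_iff, le_sup_iff] at h4 h5
    rcases h4 with h4 | h4 <;> linarith
  rw [h1, h2, h3, smul_eq_mul]
  have hflip : (-α)⁻¹ * Real.log (((-α) * b + (-w)) / ((-α) * a + (-w))) =
      α⁻¹ * Real.log (((-α) * a + (-w)) / ((-α) * b + (-w))) := by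
    rw [show Real.log (((-α) * b + (-w)) / ((-α) * a + (-w))) =
      -Real.log (((-α) * a + (-w)) / ((-α) * b + (-w))) by rw [← Real.log_inv, inv_div]]
    ring
  rw [hflip]
  have hlog : Real.log (((-α) * a + (-w)) / ((-α) * b + (-w))) ≤ Real.log (1 + 2 * α / ε) := by
    apply Real.log_le_log (by positivity)
    rw [div_le_iff₀ hB]
    have h2a : 2 * α / ε * ((-α) * b + (-w)) ≥ 2 * α := by
      rw [ge_iff_le, div_mul_eq_mul_div, le_div_iff₀ hε]; nlinarith
    nlinarith
  calc 2 * ε * (α⁻¹ * Real.log (((-α) * a + (-w)) / ((-α) * b + (-w))))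
      ≤ 2 * ε * (α⁻¹ * Real.log (1 + 2 * α / ε)) := by
        apply mul_le_mul_of_nonneg_left _ (by positivity)
        exact mul_le_mul_of_nonneg_left hlog (by positivity)
    _ = 2 * ε / α * Real.log (1 + 2 * α / ε) := by ring

lemma L2pos (α v ε : ℝ) (hα : 0 < α) (hε : 0 < ε) :
    ∫⁻ s in Set.Icc (-1 : ℝ) 1, ENNReal.ofReal (min 2 (2 * ε / |α * s + v|)) ≤
      ENNReal.ofReal (4 * ε / α * (1 + Real.log (1 + 2 * α / ε))) := by
  set c : ℝ := max (-1) ((ε - v) / α) with hc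
  set c' : ℝ := min 1 ((-ε - v) / α) with hc'
  set S1 : Set ℝ := Set.Icc (-1) 1 ∩ {s | |α * s + v| ≤ ε} with hS1
  set S2 : Set ℝ := Set.Icc (-1) 1 ∩ {s | ε < α * s + v} with hS2
  set S3 : Set ℝ := Set.Icc (-1) 1 ∩ {s | α * s + v < -ε} with hS3
  have hcover : Set.Icc (-1 : ℝ) 1 ⊆ (S1 ∪ S2) ∪ S3 := by
    intro s hs
    rcases le_or_gt (|α * s + v|) ε with h | h
    · exact Or.inl (Or.inl ⟨hs, h⟩)
    · rcases lt_or_ge (α * s + v) 0 with h2 | h2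
      · refine Or.inr ⟨hs, ?_⟩
        rw [abs_of_neg h2] at h
        show α * s + v < -ε
        linarith
      · refine Or.inl (Or.inr ⟨hs, ?_⟩)
        rw [abs_of_nonneg h2] at h
        show ε < α * s + v
        linarith
  set F : ℝ → ℝ≥0∞ := fun s => ENNReal.ofReal (min 2 (2 * ε / |α * s + v|)) with hF
  have hsplit : ∫⁻ s in Set.Icc (-1 : ℝ) 1, F s ≤
      (∫⁻ s in S1, F s) + (∫⁻ s in S2, F s) + (∫⁻ s in S3, F s) := by
    calc ∫⁻ s in Set.Icc (-1 : ℝ) 1, F s ≤ ∫⁻ s in (S1 ∪ S2) ∪ S3, F s :=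
          lintegral_mono_set hcover
      _ ≤ (∫⁻ s in S1 ∪ S2, F s) + (∫⁻ s in S3, F s) := lintegral_union_le _ _ _
      _ ≤ (∫⁻ s in S1, F s) + (∫⁻ s in S2, F s) + (∫⁻ s in S3, F s) :=
          add_le_add_left (lintegral_union_le _ _ _) _
  -- Term 1
  have hT1 : (∫⁻ s in S1, F s) ≤ ENNReal.ofReal (4 * ε / α) := by
    calc (∫⁻ s in S1, F s) ≤ ∫⁻ _ in S1, (ENNReal.ofReal 2) := by
          apply lintegral_mono
          intro s
          exact ENNReal.ofReal_le_ofReal (min_le_left _ _)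
      _ = ENNReal.ofReal 2 * volume S1 := by rw [setLIntegral_const]
      _ ≤ ENNReal.ofReal 2 * ENNReal.ofReal (2 * ε / |α|) := by
          apply mul_le_mul_right
          exact le_trans (measure_mono Set.inter_subset_right) (absLine α v ε hα.ne')
      _ = ENNReal.ofReal (4 * ε / α) := by
          rw [← ENNReal.ofReal_mul (by norm_num), abs_of_pos hα]
          congr 1; ring
  -- Term 2
  have hT2 : (∫⁻ s in S2, F s) ≤ ENNReal.ofReal (2 * ε / α * Real.log (1 + 2 * α / ε)) := by
    rcases le_or_gt c 1 with hcle | hcgt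
    · have hsub : S2 ⊆ Set.Icc c 1 := by
        rintro s ⟨hs, hs2⟩
        simp only [Set.mem_setOf_eq] at hs2
        refine ⟨max_le hs.1 ?_, hs.2⟩
        rw [div_le_iff₀ hα]; nlinarith [mul_comm α s]
      calc (∫⁻ s in S2, F s) ≤ ∫⁻ s in Set.Icc c 1, F s := lintegral_mono_set hsub
        _ = ∫⁻ s in Set.Ioc c 1, F s := by rw [← MeasureTheory.restrict_Ioc_eq_restrict_Icc]
        _ ≤ ∫⁻ s in Set.Ioc c 1, ENNReal.ofReal (2 * ε / (α * s + v)) := by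
            apply setLIntegral_mono' measurableSet_Ioc
            intro s hs
            have hgt : ε < α * s + v := by
              have : (ε - v) / α < s := lt_of_le_of_lt (le_max_right _ _) hs.1
              rw [div_lt_iff₀ hα] at this; linarith [mul_comm α s]
            apply ENNReal.ofReal_le_ofReal
            refine le_trans (min_le_right _ _) ?_
            rw [abs_of_pos (by linarith)]
        _ ≤ _ := tail_pos α v ε c 1 hα hε hcle (by have := le_max_left (-1 : ℝ) ((ε - v) / α); linarith)
            (by have : (ε - v) / α ≤ c := le_max_right _ _
                rw [div_le_iff₀ hα] at this; linarith [mul_comm α c])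
    · have hempty : S2 = ∅ := by
        ext s
        simp only [Set.mem_empty_iff_false, iff_false]
        rintro ⟨hs, hs2⟩
        simp only [Set.mem_setOf_eq] at hs2
        have h1 : (1 : ℝ) < (ε - v) / α := by
          by_contra h'
          push_neg at h'
          have : c ≤ 1 := max_le (by norm_num) h'
          linarith
        rw [lt_div_iff₀ hα] at h1
        have : s ≤ 1 := hs.2
        nlinarith
      rw [hempty]
      simp
  -- Term 3
  have hT3 : (∫⁻ s in S3, F s) ≤ ENNReal.ofReal (2 * ε / α * Real.log (1 + 2 * α / ε)) := by
    rcases le_or_gt (-1 : ℝ) c' with hcle | hcgt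
    · have hsub : S3 ⊆ Set.Icc (-1) c' := by
        rintro s ⟨hs, hs3⟩
        simp only [Set.mem_setOf_eq] at hs3
        refine ⟨hs.1, le_min hs.2 ?_⟩
        rw [le_div_iff₀ hα]; nlinarith [mul_comm α s]
      calc (∫⁻ s in S3, F s) ≤ ∫⁻ s in Set.Icc (-1) c', F s := lintegral_mono_set hsub
        _ = ∫⁻ s in Set.Ioc (-1) c', F s := by
            rw [← MeasureTheory.restrict_Ioc_eq_restrict_Icc]
        _ ≤ ∫⁻ s in Set.Ioc (-1) c', ENNReal.ofReal (2 * ε / (-(α * s + v))) := by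
            apply setLIntegral_mono' measurableSet_Ioc
            intro s hs
            have hlt : α * s + v ≤ -ε := by
              have : s ≤ (-ε - v) / α := le_trans hs.2 (min_le_right _ _)
              rw [le_div_iff₀ hα] at this; nlinarith [mul_comm α s]
            apply ENNReal.ofReal_le_ofReal
            refine le_trans (min_le_right _ _) ?_
            rw [abs_of_neg (by linarith)]
        _ ≤ _ := tail_neg α v ε (-1) c' hα hε hcle
            (by have : c' ≤ 1 := min_le_left _ _; linarith)
            (by have : c' ≤ (-ε - v) / α := min_le_right _ _
                rw [le_div_iff₀ hα] at this; nlinarith [mul_comm α c'])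
    · have hempty : S3 = ∅ := by
        ext s
        simp only [Set.mem_empty_iff_false, iff_false]
        rintro ⟨hs, hs3⟩
        simp only [Set.mem_setOf_eq] at hs3
        have h1 : (-ε - v) / α < -1 := by
          by_contra h'
          push_neg at h'
          have : (-1 : ℝ) ≤ c' := le_min (by norm_num) h'
          linarith
        rw [div_lt_iff₀ hα] at h1
        have : -1 ≤ s := hs.1
        nlinarith
      rw [hempty]
      simp
  calc ∫⁻ s in Set.Icc (-1 : ℝ) 1, F s
      ≤ (∫⁻ s in S1, F s) + (∫⁻ s in S2, F s) + (∫⁻ s in S3, F s) := hsplit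
    _ ≤ ENNReal.ofReal (4 * ε / α) + ENNReal.ofReal (2 * ε / α * Real.log (1 + 2 * α / ε)) +
        ENNReal.ofReal (2 * ε / α * Real.log (1 + 2 * α / ε)) :=
          add_le_add (add_le_add hT1 hT2) hT3
    _ = ENNReal.ofReal (4 * ε / α * (1 + Real.log (1 + 2 * α / ε))) := by
        have hlognn : 0 ≤ Real.log (1 + 2 * α / ε) := Real.log_nonneg (by
          have : 0 ≤ 2 * α / ε := by positivity
          linarith)
        rw [← ENNReal.ofReal_add (by positivity) (by positivity),
          ← ENNReal.ofReal_add (by positivity) (by positivity)]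
        congr 1; ring

lemma L2gen (α v ε : ℝ) (hα : α ≠ 0) (hε : 0 < ε) :
    ∫⁻ s in Set.Icc (-1 : ℝ) 1, ENNReal.ofReal (min 2 (2 * ε / |α * s + v|)) ≤
      ENNReal.ofReal (4 * ε / |α| * (1 + Real.log (1 + 2 * |α| / ε))) := by
  rcases hα.lt_or_gt with h | h
  · have heq : ∀ s : ℝ, |α * s + v| = |(-α) * s + (-v)| := by
      intro s
      rw [show (-α) * s + (-v) = -(α * s + v) by ring, abs_neg]
    calc ∫⁻ s in Set.Icc (-1 : ℝ) 1, ENNReal.ofReal (min 2 (2 * ε / |α * s + v|))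
        = ∫⁻ s in Set.Icc (-1 : ℝ) 1, ENNReal.ofReal (min 2 (2 * ε / |(-α) * s + (-v)|)) := by
          apply lintegral_congr
          intro s
          rw [heq s]
      _ ≤ ENNReal.ofReal (4 * ε / (-α) * (1 + Real.log (1 + 2 * (-α) / ε))) :=
          L2pos (-α) (-v) ε (by linarith) hε
      _ = _ := by rw [abs_of_neg h]
  · rw [abs_of_pos h]
    exact L2pos α v ε h hε

lemma marg_prod (ι : Type*) [Fintype ι] [DecidableEq ι] (B : ℝ≥0∞) (hB : B ≠ ⊤) (u : Finset ι) :
    (MeasureTheory.lmarginal (fun _ : ι => (volume : Measure ℝ)) u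
      (fun x : ι → ℝ => (∏ i ∈ u, (Set.Icc (-1 : ℝ) 1).indicator 1 (x i)) * B)) =
      fun _ => (ENNReal.ofReal 2) ^ u.card * B := by
  classical
  induction u using Finset.induction_on with
  | empty => funext x; simp [MeasureTheory.lmarginal_empty]
  | @insert i u hi IH =>
    have hindm : Measurable ((Set.Icc (-1 : ℝ) 1).indicator (1 : ℝ → ℝ≥0∞)) :=
      measurable_one.indicator measurableSet_Icc
    have hmeas : ∀ w : Finset ι, Measurable (fun x : ι → ℝ =>
        (∏ j ∈ w, (Set.Icc (-1 : ℝ) 1).indicator 1 (x j)) * B) := by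
      intro w
      apply Measurable.mul _ measurable_const
      exact Finset.measurable_prod _ (fun j _ => hindm.comp (measurable_pi_apply j))
    rw [MeasureTheory.lmarginal_insert' _ (hmeas _) hi]
    have hstep : (fun x : ι → ℝ => ∫⁻ t, (∏ j ∈ insert i u,
        (Set.Icc (-1 : ℝ) 1).indicator 1 (Function.update x i t j)) * B) =
        fun x : ι → ℝ => ENNReal.ofReal 2 *
          ((∏ j ∈ u, (Set.Icc (-1 : ℝ) 1).indicator 1 (x j)) * B) := by
      funext x
      have hprod : ∀ t : ℝ, (∏ j ∈ insert i u,
          (Set.Icc (-1 : ℝ) 1).indicator (1 : ℝ → ℝ≥0∞) (Function.update x i t j)) =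
          (Set.Icc (-1 : ℝ) 1).indicator (1 : ℝ → ℝ≥0∞) t *
            ∏ j ∈ u, (Set.Icc (-1 : ℝ) 1).indicator (1 : ℝ → ℝ≥0∞) (x j) := by
        intro t
        rw [Finset.prod_insert hi, Function.update_self]
        congr 1
        apply Finset.prod_congr rfl
        intro j hj
        rw [Function.update_of_ne (by rintro rfl; exact hi hj)]
      simp_rw [hprod, mul_assoc]
      have hfin : ((∏ j ∈ u, (Set.Icc (-1 : ℝ) 1).indicator 1 (x j)) * B) ≠ ⊤ := by
        apply ENNReal.mul_ne_top _ hB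
        apply ne_top_of_le_ne_top ENNReal.one_ne_top
        apply Finset.prod_le_one
        · intro j _; exact zero_le
        · intro j _
          exact Set.indicator_le' (fun _ _ => le_refl 1) (fun _ _ => zero_le_one) _
      rw [lintegral_mul_const' _ _ hfin]
      rw [MeasureTheory.lintegral_indicator_one measurableSet_Icc, Real.volume_Icc]
      norm_num
    rw [hstep]
    have hpull : (MeasureTheory.lmarginal (fun _ : ι => (volume : Measure ℝ)) u
        (fun x : ι → ℝ => ENNReal.ofReal 2 *
          ((∏ j ∈ u, (Set.Icc (-1 : ℝ) 1).indicator 1 (x j)) * B))) =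
        fun x => ENNReal.ofReal 2 * (MeasureTheory.lmarginal (fun _ : ι => (volume : Measure ℝ)) u
          (fun x : ι → ℝ => (∏ j ∈ u, (Set.Icc (-1 : ℝ) 1).indicator 1 (x j)) * B)) x := by
      funext x
      simp only [MeasureTheory.lmarginal]
      rw [lintegral_const_mul' _ _ (by simp : (ENNReal.ofReal 2) ≠ ⊤)]
    rw [hpull, IH]
    funext x
    rw [Finset.card_insert_of_notMem hi, pow_succ]
    ring

lemma q_affine {d : ℕ} (a : Fin d → Fin d → ℝ) (l₀ : Fin d) (x : Fin d → ℝ) (t : ℝ) :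
    (∑ k : Fin d, ∑ l : Fin d,
        (if k < l then a k l * (Function.update x l₀ t k) * (Function.update x l₀ t l) else 0)) =
    ((∑ k : Fin d, if k < l₀ then a k l₀ * x k else 0) +
        (∑ l : Fin d, if l₀ < l then a l₀ l * x l else 0)) * t +
    (∑ k : Fin d, ∑ l : Fin d,
        (if k < l then a k l * (Function.update x l₀ 0 k) * (Function.update x l₀ 0 l) else 0)) := by
  classical
  have hterm : ∀ k l : Fin d,
      (if k < l then a k l * (Function.update x l₀ t k) * (Function.update x l₀ t l) else 0) =
      (if k < l then a k l * (Function.update x l₀ 0 k) * (Function.update x l₀ 0 l) else 0) +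
        t * ((if l = l₀ then (if k < l₀ then a k l₀ * x k else 0) else 0) +
             (if k = l₀ then (if l₀ < l then a l₀ l * x l else 0) else 0)) := by
    intro k l
    simp only [Function.update_apply]
    by_cases hkl' : k < l
    · by_cases hk : k = l₀
      · have hl : ¬ l = l₀ := fun h => absurd (hk.trans h.symm) hkl'.ne
        have hll : l₀ < l := hk ▸ hkl'
        simp only [hkl', hk, hl, hll, if_true, if_false]
        ring
      · by_cases hl : l = l₀
        · have hkl0 : k < l₀ := hl ▸ hkl'
          simp only [hkl', hk, hl, hkl0, if_true, if_false]
          ring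
        · simp only [hkl', hk, hl, if_true, if_false]
          ring
    · by_cases hk : k = l₀
      · have h1' : ¬ l₀ < l := hk ▸ hkl'
        simp [hkl', hk, h1', lt_irrefl]
      · by_cases hl : l = l₀
        · have : ¬ k < l₀ := hl ▸ hkl'
          simp only [hkl', hk, hl, this, if_true, if_false]
          ring
        · simp only [hkl', hk, hl, if_true, if_false]
          ring
  rw [Finset.sum_congr rfl fun k _ => Finset.sum_congr rfl fun l _ => hterm k l]
  simp only [Finset.sum_add_distrib, ← Finset.mul_sum]
  have h1 : (∑ k : Fin d, ∑ l : Fin d,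
      if l = l₀ then (if k < l₀ then a k l₀ * x k else 0) else 0) =
      ∑ k : Fin d, if k < l₀ then a k l₀ * x k else 0 := by
    apply Finset.sum_congr rfl
    intro k _
    rw [Finset.sum_ite_eq' Finset.univ l₀ (fun _ => if k < l₀ then a k l₀ * x k else 0)]
    simp
  have h2 : (∑ k : Fin d, ∑ l : Fin d,
      if k = l₀ then (if l₀ < l then a l₀ l * x l else 0) else 0) =
      ∑ l : Fin d, if l₀ < l then a l₀ l * x l else 0 := by
    rw [Finset.sum_comm]
    apply Finset.sum_congr rfl
    intro l _
    rw [Finset.sum_ite_eq' Finset.univ l₀ (fun _ => if l₀ < l then a l₀ l * x l else 0)]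
    simp
  rw [h1, h2]
  ring

lemma C_affine {d : ℕ} (a : Fin d → Fin d → ℝ) (k₀ l₀ : Fin d) (hkl : k₀ < l₀)
    (x : Fin d → ℝ) (s : ℝ) :
    ((∑ k : Fin d, if k < l₀ then a k l₀ * (Function.update x k₀ s k) else 0) +
        (∑ l : Fin d, if l₀ < l then a l₀ l * (Function.update x k₀ s l) else 0)) =
    a k₀ l₀ * s +
      ((∑ k : Fin d, if k < l₀ then a k l₀ * (Function.update x k₀ 0 k) else 0) +
        (∑ l : Fin d, if l₀ < l then a l₀ l * (Function.update x k₀ 0 l) else 0)) := by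
  classical
  have h1 : ∀ k : Fin d,
      (if k < l₀ then a k l₀ * (Function.update x k₀ s k) else 0) =
      (if k < l₀ then a k l₀ * (Function.update x k₀ 0 k) else 0) +
        (if k = k₀ then a k₀ l₀ * s else 0) := by
    intro k
    by_cases hk : k = k₀
    · subst hk
      simp only [Function.update_self, hkl, if_true]
      ring
    · rw [Function.update_of_ne hk, Function.update_of_ne hk, if_neg hk, add_zero]
  have h2 : ∀ l : Fin d,
      (if l₀ < l then a l₀ l * (Function.update x k₀ s l) else 0) =
      (if l₀ < l then a l₀ l * (Function.update x k₀ 0 l) else 0) := by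
    intro l
    by_cases hl : l₀ < l
    · have hlk : l ≠ k₀ := fun h => absurd (h ▸ hl) (by exact fun h' => absurd (hkl.trans h') (lt_irrefl _))
      rw [if_pos hl, if_pos hl, Function.update_of_ne hlk, Function.update_of_ne hlk]
    · rw [if_neg hl, if_neg hl]
  rw [Finset.sum_congr rfl fun k _ => h1 k, Finset.sum_congr rfl fun l _ => h2 l,
    Finset.sum_add_distrib, Finset.sum_ite_eq' Finset.univ k₀ (fun _ => a k₀ l₀ * s)]
  simp
  ring

lemma final_real (d : ℕ) (hd : 2 ≤ d) (A ε : ℝ) (hA : 0 < A) (hε : 0 < ε) (hεA : ε < A) :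
    (2 : ℝ) ^ (d - 2) * (4 * ε / A * (1 + Real.log (1 + 2 * A / ε))) ≤
      (2 ^ (d + 1) * ε / A) * (1 + max 0 (Real.log (Real.sqrt d * A / ε))) := by
  have hAε : 1 < A / ε := (one_lt_div hε).mpr hεA
  have hd1 : (1 : ℝ) ≤ Real.sqrt d := by
    rw [show (1 : ℝ) = Real.sqrt 1 by simp]
    apply Real.sqrt_le_sqrt
    have : (2 : ℝ) ≤ d := by exact_mod_cast hd
    linarith
  have hsd2 : Real.sqrt 2 ≤ Real.sqrt d := by
    apply Real.sqrt_le_sqrt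
    exact_mod_cast hd
  have harg : 1 < Real.sqrt d * A / ε := by
    rw [mul_div_assoc]
    calc (1 : ℝ) < A / ε := hAε
      _ ≤ Real.sqrt d * (A / ε) := le_mul_of_one_le_left (by positivity) hd1
  have hM : max 0 (Real.log (Real.sqrt d * A / ε)) = Real.log (Real.sqrt d * A / ε) :=
    max_eq_right (Real.log_nonneg harg.le)
  have hlogsplit : Real.log (Real.sqrt d * A / ε) =
      Real.log (Real.sqrt d) + Real.log (A / ε) := by
    rw [mul_div_assoc, Real.log_mul (by positivity) (by positivity)]
  have h1414 : (1.414 : ℝ) ≤ Real.sqrt 2 := by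
    rw [Real.le_sqrt (by norm_num) (by norm_num)]
    norm_num
  have h3e : (3 : ℝ) / Real.sqrt 2 ≤ Real.exp 1 := by
    have h2 : (0 : ℝ) < Real.sqrt 2 := by positivity
    rw [div_le_iff₀ h2]
    nlinarith [Real.exp_one_gt_d9]
  have hlog3 : Real.log 3 ≤ 1 + Real.log (Real.sqrt 2) := by
    have hh := Real.log_le_log (by positivity) h3e
    rw [Real.log_div (by norm_num) (by positivity), Real.log_exp] at hh
    linarith
  have hkey : Real.log (1 + 2 * A / ε) ≤ Real.log 3 + Real.log (A / ε) := by
    rw [← Real.log_mul (by norm_num) (by positivity)]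
    apply Real.log_le_log (by positivity)
    have h2 : 2 * A / ε = 2 * (A / ε) := by ring
    rw [h2]
    linarith
  have hlogAε : 0 ≤ Real.log (A / ε) := Real.log_nonneg hAε.le
  have hlogsd : 0 ≤ Real.log (Real.sqrt d) := Real.log_nonneg hd1
  have hlogs2 : Real.log (Real.sqrt 2) ≤ Real.log (Real.sqrt d) :=
    Real.log_le_log (by positivity) hsd2
  have hmain : 1 + Real.log (1 + 2 * A / ε) ≤
      2 * (1 + max 0 (Real.log (Real.sqrt d * A / ε))) := by
    rw [hM, hlogsplit]
    linarith
  have hpow : (2 : ℝ) ^ (d - 2) * 4 = 2 ^ d := by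
    have hdd : d - 2 + 2 = d := by omega
    calc (2 : ℝ) ^ (d - 2) * 4 = 2 ^ (d - 2) * 2 ^ 2 := by norm_num
      _ = 2 ^ (d - 2 + 2) := (pow_add 2 _ 2).symm
      _ = 2 ^ d := by rw [hdd]
  have hpow2 : (2 : ℝ) ^ (d + 1) = 2 * 2 ^ d := by rw [pow_succ]; ring
  calc (2 : ℝ) ^ (d - 2) * (4 * ε / A * (1 + Real.log (1 + 2 * A / ε)))
      = (2 ^ (d - 2) * 4) * (ε / A) * (1 + Real.log (1 + 2 * A / ε)) := by ring
    _ = 2 ^ d * (ε / A) * (1 + Real.log (1 + 2 * A / ε)) := by rw [hpow]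
    _ ≤ 2 ^ d * (ε / A) * (2 * (1 + max 0 (Real.log (Real.sqrt d * A / ε)))) := by
        apply mul_le_mul_of_nonneg_left hmain (by positivity)
    _ = (2 ^ (d + 1) * ε / A) * (1 + max 0 (Real.log (Real.sqrt d * A / ε))) := by
        rw [hpow2]; ring


open Finset in
/-- Remez-type inequality for quadratic forms without square terms: if
`q(x) = ∑_{k<l} a_{kl} x_k x_l` with `A = max |a_{kl}| > 0`, and `μ` is Lebesgue measure
restricted to the unit ball `{x : ∀ i, |x i| ≤ 1}` of `ℝ^d`, then for all `ε > 0`,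
`μ {x : |q x| ≤ ε} ≤ (2^{d+1} ε / A) (1 + log⁺(√d A / ε))`. -/
theorem quadratic_level_set_measure
    {d : ℕ} (a : Fin d → Fin d → ℝ) (A : ℝ)
    (hA_bound : ∀ k l : Fin d, k < l → |a k l| ≤ A)
    (hA_max : ∃ k l : Fin d, k < l ∧ |a k l| = A)
    (h_ne : ∃ k l : Fin d, k < l ∧ a k l ≠ 0)
    (μ : Measure (Fin d → ℝ))
    (hμ : μ = volume.restrict {x : Fin d → ℝ | ∀ i, |x i| ≤ 1}) :
    ∀ ε : ℝ, 0 < ε →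
      μ {x : Fin d → ℝ | |∑ k : Fin d, ∑ l : Fin d, (if k < l then a k l * x k * x l else 0)| ≤ ε}
        ≤ ENNReal.ofReal ((2 ^ (d + 1) * ε / A) * (1 + max 0 (Real.log (Real.sqrt d * A / ε)))) := by
  classical
  intro ε hε
  subst hμ
  obtain ⟨k₀, l₀, hkl, hA⟩ := hA_max
  have hApos : 0 < A := by
    obtain ⟨k, l, hkl', hne⟩ := h_ne
    exact lt_of_lt_of_le (abs_pos.mpr hne) (hA_bound k l hkl')
  have hαne : a k₀ l₀ ≠ 0 := by
    intro h
    rw [h, abs_zero] at hA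
    exact hApos.ne hA
  have hd2 : 2 ≤ d := by
    have h1 := hkl
    rw [Fin.lt_def] at h1
    have h2 := l₀.isLt
    omega
  have hk0l0 : k₀ ≠ l₀ := ne_of_lt hkl
  set S : Set (Fin d → ℝ) :=
    {x : Fin d → ℝ | |∑ k : Fin d, ∑ l : Fin d, (if k < l then a k l * x k * x l else 0)| ≤ ε}
    with hS
  set cube : Set (Fin d → ℝ) := {x : Fin d → ℝ | ∀ i, |x i| ≤ 1} with hcube
  set ind : ℝ → ℝ≥0∞ := (Set.Icc (-1 : ℝ) 1).indicator (1 : ℝ → ℝ≥0∞) with hind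
  set C : (Fin d → ℝ) → ℝ := fun y =>
    (∑ k : Fin d, if k < l₀ then a k l₀ * y k else 0) +
      (∑ l : Fin d, if l₀ < l then a l₀ l * y l else 0) with hC
  set E : (Fin d → ℝ) → ℝ := fun y => ∑ k : Fin d, ∑ l : Fin d,
    (if k < l then a k l * (Function.update y l₀ 0 k) * (Function.update y l₀ 0 l) else 0) with hE
  -- membership criterion for updated points
  have hmem : ∀ (y : Fin d → ℝ) (t : ℝ),
      Function.update y l₀ t ∈ S ↔ |C y * t + E y| ≤ ε := by
    intro y t
    simp only [hS, Set.mem_setOf_eq, hC, hE]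
    rw [q_affine a l₀ y t]
  -- measurability
  have hqcont : Continuous fun x : Fin d → ℝ =>
      ∑ k : Fin d, ∑ l : Fin d, (if k < l then a k l * x k * x l else 0) := by
    apply continuous_finset_sum
    intro k _
    apply continuous_finset_sum
    intro l _
    by_cases h : k < l
    · simp only [if_pos h]
      exact (continuous_const.mul (continuous_apply k)).mul (continuous_apply l)
    · simp only [if_neg h]
      exact continuous_const
  have hSmeas : MeasurableSet S := by
    rw [hS]
    exact measurableSet_le hqcont.abs.measurable measurable_const
  have hcubemeas : MeasurableSet cube := by
    rw [hcube, Set.setOf_forall]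
    exact MeasurableSet.iInter fun i =>
      measurableSet_le ((measurable_pi_apply i).abs) measurable_const
  have hindmeas : Measurable ind := measurable_one.indicator measurableSet_Icc
  have hind_le_one : ∀ r : ℝ, ind r ≤ 1 := by
    intro r
    rw [hind]
    exact Set.indicator_le' (fun _ _ => le_refl 1) (fun _ _ => zero_le_one) r
  have hprod_le_one : ∀ (u : Finset (Fin d)) (y : Fin d → ℝ), (∏ i ∈ u, ind (y i)) ≤ 1 :=
    fun u y => Finset.prod_le_one (fun i _ => zero_le) (fun i _ => hind_le_one (y i))
  have hprod_ne_top : ∀ (u : Finset (Fin d)) (y : Fin d → ℝ), (∏ i ∈ u, ind (y i)) ≠ ⊤ :=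
    fun u y => ne_top_of_le_ne_top ENNReal.one_ne_top (hprod_le_one u y)
  set f : (Fin d → ℝ) → ℝ≥0∞ := fun x => S.indicator 1 x * ∏ i : Fin d, ind (x i) with hf
  have hfmeas : Measurable f := by
    apply Measurable.mul (measurable_one.indicator hSmeas)
    exact Finset.measurable_prod _ fun i _ => hindmeas.comp (measurable_pi_apply i)
  -- μ S = ∫⁻ f
  have hμS : volume.restrict cube S = ∫⁻ x, f x ∂(volume : Measure (Fin d → ℝ)) := by
    rw [Measure.restrict_apply hSmeas, ← MeasureTheory.lintegral_indicator_one
      (hSmeas.inter hcubemeas)]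
    apply lintegral_congr
    intro x
    rw [Set.inter_indicator_one, Pi.mul_apply, hf]
    congr 1
    by_cases hx : x ∈ cube
    · rw [Set.indicator_of_mem hx]
      symm
      apply Finset.prod_eq_one
      intro i _
      rw [hind]
      apply Set.indicator_of_mem
      rw [Set.mem_Icc]
      have := abs_le.mp (hx i)
      exact ⟨this.1, this.2⟩
    · rw [Set.indicator_of_notMem hx]
      symm
      simp only [hcube, Set.mem_setOf_eq] at hx
      push_neg at hx
      obtain ⟨i, hi⟩ := hx
      apply Finset.prod_eq_zero (Finset.mem_univ i)
      rw [hind]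
      apply Set.indicator_of_notMem
      rw [Set.mem_Icc]
      rintro ⟨ha, hb⟩
      exact absurd (abs_le.mpr ⟨ha, hb⟩) (not_le.mpr hi)
  -- marginal chain
  set ν : Fin d → Measure ℝ := fun _ => volume with hν
  set x₀ : Fin d → ℝ := fun _ => 0 with hx₀
  set g1 : (Fin d → ℝ) → ℝ≥0∞ := fun y => ∫⁻ t, f (Function.update y l₀ t) ∂(ν l₀) with hg1
  have hg1meas : Measurable g1 := by
    have heq : g1 = MeasureTheory.lmarginal ν {l₀} f := by
      rw [MeasureTheory.lmarginal_singleton]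
    rw [heq]
    exact hfmeas.lmarginal ν
  have hk₀mem : k₀ ∈ Finset.univ.erase l₀ := Finset.mem_erase.mpr ⟨hk0l0, Finset.mem_univ k₀⟩
  set rest : Finset (Fin d) := (Finset.univ.erase l₀).erase k₀ with hrest
  set g2 : (Fin d → ℝ) → ℝ≥0∞ := fun y => ∫⁻ s, g1 (Function.update y k₀ s) ∂(ν k₀) with hg2
  have hchain : (MeasureTheory.lmarginal ν Finset.univ f) x₀ =
      (MeasureTheory.lmarginal ν rest g2) x₀ := by
    rw [MeasureTheory.lmarginal_erase' f hfmeas (Finset.mem_univ l₀),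
      MeasureTheory.lmarginal_erase' g1 hg1meas hk₀mem]
  -- inner slice function
  set I1 : (Fin d → ℝ) → ℝ≥0∞ :=
    fun y => ∫⁻ t, ind t * S.indicator 1 (Function.update y l₀ t) ∂(volume : Measure ℝ) with hI1
  have hupd_prod : ∀ (y : Fin d → ℝ) (j : Fin d) (t : ℝ) (u : Finset (Fin d)), j ∈ u →
      (∏ i ∈ u, ind (Function.update y j t i)) = ind t * ∏ i ∈ u.erase j, ind (y i) := by
    intro y j t u hj
    have hpt : ∀ i : Fin d, ind (Function.update y j t i) =
        Function.update (fun i' => ind (y i')) j (ind t) i := by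
      intro i
      by_cases hi : i = j
      · subst hi; rw [Function.update_self, Function.update_self]
      · rw [Function.update_of_ne hi, Function.update_of_ne hi]
    simp_rw [hpt]
    rw [Finset.prod_update_of_mem hj, Finset.sdiff_singleton_eq_erase]
  have hg1eq : ∀ y : Fin d → ℝ,
      g1 y = (∏ i ∈ Finset.univ.erase l₀, ind (y i)) * I1 y := by
    intro y
    rw [hg1, hI1]
    have hpt : ∀ t : ℝ, f (Function.update y l₀ t) =
        (∏ i ∈ Finset.univ.erase l₀, ind (y i)) *
          (ind t * S.indicator 1 (Function.update y l₀ t)) := by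
      intro t
      simp only [hf]
      rw [hupd_prod y l₀ t Finset.univ (Finset.mem_univ l₀)]
      ring
    simp_rw [hpt]
    exact lintegral_const_mul' _ _ (hprod_ne_top _ y)
  have hg2eq : ∀ x : Fin d → ℝ,
      g2 x = (∏ i ∈ rest, ind (x i)) *
        ∫⁻ s, ind s * I1 (Function.update x k₀ s) ∂(volume : Measure ℝ) := by
    intro x
    rw [hg2]
    have hpt : ∀ s : ℝ, g1 (Function.update x k₀ s) =
        (∏ i ∈ rest, ind (x i)) * (ind s * I1 (Function.update x k₀ s)) := by
      intro s
      rw [hg1eq (Function.update x k₀ s),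
        hupd_prod x k₀ s (Finset.univ.erase l₀) hk₀mem, hrest]
      ring
    simp_rw [hpt]
    exact lintegral_const_mul' _ _ (hprod_ne_top _ x)
  -- bounds on I1
  have hI1_le2 : ∀ y : Fin d → ℝ, I1 y ≤ ENNReal.ofReal 2 := by
    intro y
    rw [hI1]
    calc (∫⁻ t, ind t * S.indicator 1 (Function.update y l₀ t) ∂(volume : Measure ℝ))
        ≤ ∫⁻ t, ind t ∂(volume : Measure ℝ) := by
          apply lintegral_mono
          intro t
          calc ind t * S.indicator 1 (Function.update y l₀ t) ≤ ind t * 1 := by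
                apply mul_le_mul_right
                exact Set.indicator_le' (fun _ _ => le_refl 1) (fun _ _ => zero_le_one) _
            _ = ind t := mul_one _
      _ = ENNReal.ofReal 2 := by
          rw [hind, MeasureTheory.lintegral_indicator_one measurableSet_Icc, Real.volume_Icc]
          norm_num
  have hI1_min : ∀ y : Fin d → ℝ, C y ≠ 0 →
      I1 y ≤ ENNReal.ofReal (min 2 (2 * ε / |C y|)) := by
    intro y hCy
    rcases le_total (2 : ℝ) (2 * ε / |C y|) with h | h
    · rw [min_eq_left h]
      exact hI1_le2 y
    · rw [min_eq_right h]
      have hTmeas : MeasurableSet {t : ℝ | |C y * t + E y| ≤ ε} :=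
        measurableSet_le (((measurable_id.const_mul (C y)).add_const (E y)).abs)
          measurable_const
      calc I1 y ≤ ∫⁻ t, Set.indicator {t : ℝ | |C y * t + E y| ≤ ε} 1 t
            ∂(volume : Measure ℝ) := by
            rw [hI1]
            apply lintegral_mono
            intro t
            show ind t * S.indicator 1 (Function.update y l₀ t) ≤ _
            by_cases hmem' : Function.update y l₀ t ∈ S
            · have ht : t ∈ {t : ℝ | |C y * t + E y| ≤ ε} := (hmem y t).mp hmem'
              rw [Set.indicator_of_mem hmem', Set.indicator_of_mem ht]
              calc ind t * 1 = ind t := mul_one _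
                _ ≤ 1 := hind_le_one t
            · rw [Set.indicator_of_notMem hmem', mul_zero]
              exact zero_le
        _ = volume {t : ℝ | |C y * t + E y| ≤ ε} :=
            MeasureTheory.lintegral_indicator_one hTmeas
        _ ≤ ENNReal.ofReal (2 * ε / |C y|) := absLine (C y) (E y) ε hCy
  -- the J bound
  set Bval : ℝ≥0∞ := ENNReal.ofReal (4 * ε / A * (1 + Real.log (1 + 2 * A / ε))) with hBval
  have hJ : ∀ x : Fin d → ℝ,
      (∫⁻ s, ind s * I1 (Function.update x k₀ s) ∂(volume : Measure ℝ)) ≤ Bval := by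
    intro x
    set vx : ℝ := C (Function.update x k₀ 0) with hvx
    have hCupd : ∀ s : ℝ, C (Function.update x k₀ s) = a k₀ l₀ * s + vx := by
      intro s
      rw [hvx, hC]
      exact C_affine a k₀ l₀ hkl x s
    calc (∫⁻ s, ind s * I1 (Function.update x k₀ s) ∂(volume : Measure ℝ))
        ≤ ∫⁻ s, ind s * ENNReal.ofReal (min 2 (2 * ε / |a k₀ l₀ * s + vx|))
            ∂(volume : Measure ℝ) := by
          have hnull : volume {s : ℝ | a k₀ l₀ * s + vx = 0} = 0 := by
            apply measure_mono_null _ (measure_singleton (-vx / a k₀ l₀))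
            intro s hs
            simp only [Set.mem_setOf_eq] at hs
            rw [Set.mem_singleton_iff, eq_div_iff hαne]
            linarith [mul_comm s (a k₀ l₀)]
          apply lintegral_mono_ae
          rw [Filter.eventually_iff, mem_ae_iff]
          apply measure_mono_null _ hnull
          intro s hs
          simp only [Set.mem_compl_iff, Set.mem_setOf_eq] at hs ⊢
          by_contra hzero
          apply hs
          apply mul_le_mul_right
          have hh := hI1_min (Function.update x k₀ s) (by rw [hCupd s]; exact hzero)
          rwa [hCupd s] at hh
      _ = ∫⁻ s in Set.Icc (-1 : ℝ) 1,
            ENNReal.ofReal (min 2 (2 * ε / |a k₀ l₀ * s + vx|)) ∂(volume : Measure ℝ) := by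
          rw [← lintegral_indicator measurableSet_Icc]
          apply lintegral_congr
          intro s
          rw [hind]
          by_cases hs : s ∈ Set.Icc (-1 : ℝ) 1
          · rw [Set.indicator_of_mem hs, Set.indicator_of_mem hs, Pi.one_apply, one_mul]
          · rw [Set.indicator_of_notMem hs, Set.indicator_of_notMem hs, zero_mul]
      _ ≤ ENNReal.ofReal (4 * ε / |a k₀ l₀| * (1 + Real.log (1 + 2 * |a k₀ l₀| / ε))) :=
          L2gen (a k₀ l₀) vx ε hαne hε
      _ = Bval := by rw [hA, hBval]
  -- put everything together
  have hg2le : ∀ x : Fin d → ℝ, g2 x ≤ (∏ i ∈ rest, ind (x i)) * Bval := by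
    intro x
    rw [hg2eq x]
    exact mul_le_mul_right (hJ x) _
  have hBne : Bval ≠ ⊤ := ENNReal.ofReal_ne_top
  have hcard : rest.card = d - 2 := by
    rw [hrest, Finset.card_erase_of_mem hk₀mem,
      Finset.card_erase_of_mem (Finset.mem_univ l₀), Finset.card_univ, Fintype.card_fin]
    omega
  have hfinal : volume.restrict cube S ≤ (ENNReal.ofReal 2) ^ (d - 2) * Bval := by
    calc volume.restrict cube S = ∫⁻ x, f x ∂(volume : Measure (Fin d → ℝ)) := hμS
      _ = (MeasureTheory.lmarginal ν Finset.univ f) x₀ := by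
          rw [MeasureTheory.volume_pi]
          exact MeasureTheory.lintegral_eq_lmarginal_univ x₀
      _ = (MeasureTheory.lmarginal ν rest g2) x₀ := hchain
      _ ≤ (MeasureTheory.lmarginal ν rest
            (fun x => (∏ i ∈ rest, ind (x i)) * Bval)) x₀ :=
          MeasureTheory.lmarginal_mono hg2le x₀
      _ = (ENNReal.ofReal 2) ^ rest.card * Bval := by
          rw [hind, hν]
          rw [marg_prod (Fin d) Bval hBne rest]
      _ = (ENNReal.ofReal 2) ^ (d - 2) * Bval := by rw [hcard]
  -- final numeric comparison
  rcases lt_or_ge ε A with hcase | hcase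
  · calc volume.restrict cube S ≤ (ENNReal.ofReal 2) ^ (d - 2) * Bval := hfinal
      _ = ENNReal.ofReal ((2 : ℝ) ^ (d - 2) * (4 * ε / A * (1 + Real.log (1 + 2 * A / ε)))) := by
          rw [hBval, ← ENNReal.ofReal_pow (by norm_num), ← ENNReal.ofReal_mul (by positivity)]
      _ ≤ ENNReal.ofReal ((2 ^ (d + 1) * ε / A) *
            (1 + max 0 (Real.log (Real.sqrt d * A / ε)))) :=
          ENNReal.ofReal_le_ofReal (final_real d hd2 A ε hApos hε hcase)
  · have hcubevol : volume cube = ENNReal.ofReal ((2 : ℝ) ^ d) := by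
      have hcs : cube = Set.pi Set.univ (fun _ : Fin d => Set.Icc (-1 : ℝ) 1) := by
        ext x
        simp only [hcube, Set.mem_setOf_eq, Set.mem_pi, Set.mem_univ, forall_true_left,
          Set.mem_Icc]
        constructor
        · intro h i
          exact abs_le.mp (h i)
        · intro h i
          exact abs_le.mpr (h i)
      rw [hcs, MeasureTheory.volume_pi_pi]
      simp only [Real.volume_Icc]
      rw [Finset.prod_const, Finset.card_univ, Fintype.card_fin,
        ← ENNReal.ofReal_pow (by norm_num)]
      norm_num
    calc volume.restrict cube S ≤ volume cube := by
          rw [Measure.restrict_apply hSmeas]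
          exact measure_mono Set.inter_subset_right
      _ = ENNReal.ofReal ((2 : ℝ) ^ d) := hcubevol
      _ ≤ ENNReal.ofReal ((2 ^ (d + 1) * ε / A) *
            (1 + max 0 (Real.log (Real.sqrt d * A / ε)))) := by
          apply ENNReal.ofReal_le_ofReal
          have h1 : (1 : ℝ) ≤ ε / A := (one_le_div hApos).mpr hcase
          have h0 : (0 : ℝ) ≤ max 0 (Real.log (Real.sqrt d * A / ε)) := le_max_left _ _
          have hp : (0 : ℝ) < 2 ^ d := by positivity
          calc (2 : ℝ) ^ d ≤ 2 ^ d * (2 * (ε / A) *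
                (1 + max 0 (Real.log (Real.sqrt d * A / ε)))) := by
                apply le_mul_of_one_le_right hp.le
                nlinarith
            _ = (2 ^ (d + 1) * ε / A) * (1 + max 0 (Real.log (Real.sqrt d * A / ε))) := by
                rw [pow_succ]; ring
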